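/- Let S : V → W and T₁, …, Tₙ : X → Y be linear transformations with rank S ≤ rank T₁ + ⋯ + rank Tₙ (as cardinals). Then there exist linear transformations Pᵢ : Y → W and Qᵢ : V → X (1 ≤ i ≤ n) such that S = Σ_{i=1}^n Pᵢ ∘ Tᵢ ∘ Qᵢ. -/
import Mathlib


universe u

def sigmaFinSucc (m : ℕ) (g : Fin (m+1) → Type u) :
    (Σ i, g i) ≃ (g 0 ⊕ Σ i : Fin m, g i.succ) where
  toFun x := Fin.cases (motive := fun j => g j → (g 0 ⊕ Σ i : Fin m, g i.succ))
    (fun a => Sum.inl a) (fun i a => Sum.inr ⟨i, a⟩) x.1 x.2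
  invFun s := Sum.rec (fun a => ⟨0, a⟩) (fun p => ⟨p.1.succ, p.2⟩) s
  left_inv := by
    rintro ⟨i, a⟩
    induction i using Fin.cases <;> simp
  right_inv := by rintro (a | ⟨i, a⟩) <;> rfl

open Cardinal in
theorem cardSum (n : ℕ) (f : Fin n → Cardinal.{u}) : Cardinal.sum f = ∑ i, f i := by
  induction n with
  | zero =>
      have : Cardinal.sum f = #(Σ i : Fin 0, (f i).out) := by
        rw [Cardinal.mk_sigma]; simp
      simp [this]
  | succ m ih =>
      rw [Fin.sum_univ_succ, ← ih (fun i : Fin m => f i.succ)]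
      have h1 : Cardinal.sum f = #(Σ i : Fin (m+1), (f i).out) := by
        rw [Cardinal.mk_sigma]; simp
      have h2 : (Cardinal.sum fun i : Fin m => f i.succ) = #(Σ i : Fin m, (f i.succ).out) := by
        rw [Cardinal.mk_sigma]; simp
      rw [h1, h2, ← Cardinal.mk_out (f 0), Cardinal.add_def]
      exact Cardinal.mk_congr (sigmaFinSucc m fun i => (f i).out)

theorem key_factor {D V W X Y : Type u} [DivisionRing D]
    [AddCommGroup V] [Module D V] [AddCommGroup W] [Module D W]
    [AddCommGroup X] [Module D X] [AddCommGroup Y] [Module D Y]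
    (S : V →ₗ[D] W) (T : X →ₗ[D] Y)
    (h : Module.rank D (LinearMap.range S) ≤ Module.rank D (LinearMap.range T)) :
    ∃ (P : Y →ₗ[D] W) (Q : V →ₗ[D] X), S = (P.comp T).comp Q := by
  classical
  let b := Module.Free.chooseBasis D (LinearMap.range S)
  let c := Module.Free.chooseBasis D (LinearMap.range T)
  have hcard : Cardinal.mk (Module.Free.ChooseBasisIndex D (LinearMap.range S))
      ≤ Cardinal.mk (Module.Free.ChooseBasisIndex D (LinearMap.range T)) := by
    rwa [Module.Free.rank_eq_card_chooseBasisIndex, Module.Free.rank_eq_card_chooseBasisIndex] at h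
  obtain ⟨f⟩ := Cardinal.le_def _ _ |>.mp hcard
  have hx : ∀ k, ∃ x : X, T x = ((c (f k) : LinearMap.range T) : Y) := fun k => (c (f k)).2
  choose x hxx using hx
  obtain ⟨C, hC⟩ := Submodule.exists_isCompl (LinearMap.range T)
  let π := (LinearMap.range T).linearProjOfIsCompl C hC
  let ψ : (LinearMap.range T) →ₗ[D] W :=
    c.constr ℕ (fun i => if hi : ∃ k, f k = i then ((b hi.choose : LinearMap.range S) : W) else 0)
  let P : Y →ₗ[D] W := ψ.comp π
  let Q : V →ₗ[D] X := (b.constr ℕ x).comp S.rangeRestrict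
  refine ⟨P, Q, ?_⟩
  have hmain : (P.comp T).comp (b.constr ℕ x) = (LinearMap.range S).subtype := by
    apply b.ext
    intro k
    have h1 : (b.constr ℕ x) (b k) = x k := b.constr_basis ℕ x k
    have h2 : π ((c (f k) : LinearMap.range T) : Y) = c (f k) :=
      Submodule.linearProjOfIsCompl_apply_left hC (c (f k))
    have hex : ∃ k', f k' = f k := ⟨k, rfl⟩
    have hch : hex.choose = k := f.injective hex.choose_spec
    have h3 : ψ (c (f k)) = ((b k : LinearMap.range S) : W) := by
      rw [c.constr_basis]
      rw [dif_pos hex, hch]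
    simp only [LinearMap.comp_apply, h1, hxx k, Submodule.coe_subtype]
    show ψ (π ((c (f k) : LinearMap.range T) : Y)) = _
    rw [h2, h3]
  have hfact : S = (LinearMap.range S).subtype.comp S.rangeRestrict :=
    (LinearMap.subtype_comp_codRestrict _ _ _).symm
  calc S = (LinearMap.range S).subtype.comp S.rangeRestrict := hfact
    _ = ((P.comp T).comp (b.constr ℕ x)).comp S.rangeRestrict := by rw [hmain]
    _ = (P.comp T).comp Q := by rw [LinearMap.comp_assoc]

theorem stmt_17 {D V W X Y : Type u} [DivisionRing D]
    [AddCommGroup V] [Module D V] [AddCommGroup W] [Module D W]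
    [AddCommGroup X] [Module D X] [AddCommGroup Y] [Module D Y]
    (n : ℕ) (S : V →ₗ[D] W) (T : Fin n → (X →ₗ[D] Y))
    (h : Module.rank D (LinearMap.range S) ≤
      ∑ i, Module.rank D (LinearMap.range (T i))) :
    ∃ (P : Fin n → (Y →ₗ[D] W)) (Q : Fin n → (V →ₗ[D] X)),
      S = ∑ i, ((P i).comp (T i)).comp (Q i) := by
  classical
  let T' : (Fin n → X) →ₗ[D] (Fin n → Y) :=
    LinearMap.pi (fun i => (T i).comp (LinearMap.proj i))
  have hmem : ∀ (y : LinearMap.range T') (i : Fin n), y.1 i ∈ LinearMap.range (T i) := by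
    rintro ⟨y, x, rfl⟩ i
    exact ⟨x i, rfl⟩
  let φ : LinearMap.range T' →ₗ[D] (∀ i, LinearMap.range (T i)) :=
    LinearMap.pi (fun i => LinearMap.restrict (LinearMap.proj i) (fun y hy => by
      exact hmem ⟨y, hy⟩ i))
  have hsurj : Function.Surjective φ := by
    intro y
    have : ∀ i, ∃ x : X, T i x = (y i : Y) := fun i => (y i).2
    choose xs hxs using this
    refine ⟨⟨T' xs, xs, rfl⟩, ?_⟩
    funext i
    exact Subtype.ext (hxs i)
  have hrank : Module.rank D (LinearMap.range S) ≤ Module.rank D (LinearMap.range T') := by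
    refine h.trans ?_
    rw [← cardSum n (fun i => Module.rank D (LinearMap.range (T i))), ← rank_pi]
    exact LinearMap.rank_le_of_surjective φ hsurj
  obtain ⟨P', Q', hPQ⟩ := key_factor S T' hrank
  refine ⟨fun i => P'.comp (LinearMap.single D (fun _ => Y) i),
    fun i => (LinearMap.proj i).comp Q', ?_⟩
  ext v
  rw [hPQ]
  simp only [LinearMap.comp_apply, LinearMap.sum_apply, LinearMap.comp_apply]
  rw [← map_sum]
  congr 1
  have : (∑ i, LinearMap.single D (fun _ => Y) i
        (T i ((LinearMap.proj i : (Fin n → X) →ₗ[D] X) (Q' v))))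
      = fun i => T i (Q' v i) := by
    simpa using Finset.univ_sum_single (fun i => T i (Q' v i))
  rw [this]
  rfl
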